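/- Let H₀ be a Hermitian n×n complex matrix, E₀ a real number with E₀²·1 ≤ H₀² in the Loewner order (i.e. H₀² − E₀²·1 is positive semidefinite), and Π₀ a Hermitian matrix with Π₀² = Π₀, H₀Π₀ = E₀·Π₀ and Π₀H₀ = E₀·Π₀ (the ground-state eigenprojector). Let γ ≥ 0, let ψ : ℝ → ℂⁿ be differentiable with ‖ψ(t)‖ = 1, set ρ(t) := ψ(t)ψ(t)ᴴ, and suppose ρ'(t) = −i⁅H₀, ρ(t)⁆ − γ·⁅⁅H₀², ρ(t)⁆, ρ(t)⁆. Then d/dt tr(Π₀ ρ(t)) ≥ 0 for all t: the ground-state population is nondecreasing along the feedback-induced double-bracket flow. -/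

import Mathlib

open Matrix
open scoped ComplexOrder

attribute [local instance] Matrix.normedAddCommGroup Matrix.normedSpace

lemma trace_nonneg_of_posSemidef {m : ℕ} {Q : Matrix (Fin m) (Fin m) ℂ}
    (h : Q.PosSemidef) : 0 ≤ Q.trace := by
  rw [Matrix.trace]
  refine Finset.sum_nonneg fun i _ => ?_
  exact h.diag_nonneg

set_option maxRecDepth 8000 in
set_option maxHeartbeats 1000000 in
theorem ground_state_population_nondecreasing
    (n : ℕ) (H₀ P₀ : Matrix (Fin n) (Fin n) ℂ)
    (hH : H₀ᴴ = H₀) (E₀ : ℝ)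
    (hLoewner : (H₀ ^ 2 - ((E₀ : ℂ) ^ 2) • (1 : Matrix (Fin n) (Fin n) ℂ)).PosSemidef)
    (hPherm : P₀ᴴ = P₀) (hP2 : P₀ * P₀ = P₀)
    (hPE : H₀ * P₀ = (E₀ : ℂ) • P₀) (hEP : P₀ * H₀ = (E₀ : ℂ) • P₀)
    (γ : ℝ) (hγ : 0 ≤ γ)
    (ψ : ℝ → Fin n → ℂ) (hψ : Differentiable ℝ ψ)
    (hunit : ∀ t, star (ψ t) ⬝ᵥ ψ t = 1)
    (ρ : ℝ → Matrix (Fin n) (Fin n) ℂ)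
    (hρ : ∀ t, ρ t = vecMulVec (ψ t) (star (ψ t)))
    (hρ' : ∀ t, HasDerivAt ρ
      ((-Complex.I) • ⁅H₀, ρ t⁆ - (γ : ℂ) • ⁅⁅H₀ ^ 2, ρ t⁆, ρ t⁆) t) :
    ∀ t, ∀ d : ℂ, HasDerivAt (fun s => (P₀ * ρ s).trace) d t → 0 ≤ d := by
  intro t d hd
  set R := ρ t with hR
  set v := (-Complex.I) • ⁅H₀, R⁆ - (γ : ℂ) • ⁅⁅H₀ ^ 2, R⁆, R⁆ with hv
  -- the derivative is tr(P₀ v)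
  have hdL : HasDerivAt (fun s => (P₀ * ρ s).trace) ((P₀ * v).trace) t := by
    let L : Matrix (Fin n) (Fin n) ℂ →ₗ[ℝ] ℂ :=
      ((Matrix.traceLinearMap (Fin n) ℂ ℂ).comp (LinearMap.mulLeft ℂ P₀)).restrictScalars ℝ
    have h := (L.toContinuousLinearMap.hasFDerivAt (x := R)).comp_hasDerivAt t (hρ' t)
    simp only [L, LinearMap.coe_toContinuousLinearMap, LinearMap.coe_restrictScalars,
      LinearMap.coe_comp, Function.comp, Matrix.traceLinearMap_apply,
      LinearMap.mulLeft_apply, ContinuousLinearMap.coe_coe] at h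
    exact h
  have hde : d = (P₀ * v).trace := hd.unique hdL
  -- basic facts about R
  have hRR : R * R = R := by
    rw [hR, hρ t]
    ext i j
    have hu : ∑ k, star (ψ t k) * ψ t k = 1 := by simpa [dotProduct] using hunit t
    simp only [Matrix.mul_apply, vecMulVec_apply, Pi.star_apply]
    calc ∑ k, ψ t i * star (ψ t k) * (ψ t k * star (ψ t j))
        = (ψ t i * star (ψ t j)) * ∑ k, star (ψ t k) * ψ t k := by
          rw [Finset.mul_sum]; congr 1; ext k; ring
      _ = ψ t i * star (ψ t j) := by rw [hu]; ring
  have hRH : Rᴴ = R := by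
    rw [hR, hρ t]
    ext i j
    simp [vecMulVec_apply, Matrix.conjTranspose_apply, mul_comm]
  have hPA : P₀ * H₀ ^ 2 = ((E₀ : ℂ) ^ 2) • P₀ := by
    rw [sq, ← Matrix.mul_assoc, hEP, Matrix.smul_mul, hEP, smul_smul, sq]
  have hAP : H₀ ^ 2 * P₀ = ((E₀ : ℂ) ^ 2) • P₀ := by
    rw [sq, Matrix.mul_assoc, hPE, Matrix.mul_smul, hPE, smul_smul, sq]
  set B := H₀ ^ 2 - ((E₀ : ℂ) ^ 2) • (1 : Matrix (Fin n) (Fin n) ℂ) with hB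
  -- trace identity
  have key : (P₀ * v).trace = (2 * (γ : ℂ)) * (P₀ * (R * B * R)).trace := by
    have e1 : (P₀ * (H₀ * R)).trace = (E₀ : ℂ) * (P₀ * R).trace := by
      rw [← Matrix.mul_assoc, hEP, Matrix.smul_mul, Matrix.trace_smul, smul_eq_mul]
    have e2 : (P₀ * (R * H₀)).trace = (E₀ : ℂ) * (P₀ * R).trace := by
      rw [← Matrix.mul_assoc, Matrix.trace_mul_comm, ← Matrix.mul_assoc, hPE,
        Matrix.smul_mul, Matrix.trace_smul, smul_eq_mul, Matrix.trace_mul_comm]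
    have e3 : (P₀ * (H₀ ^ 2 * R * R)).trace = ((E₀ : ℂ) ^ 2) * (P₀ * R).trace := by
      rw [Matrix.mul_assoc (H₀ ^ 2), hRR, ← Matrix.mul_assoc, hPA, Matrix.smul_mul,
        Matrix.trace_smul, smul_eq_mul]
    have e4 : (P₀ * (R * R * H₀ ^ 2)).trace = ((E₀ : ℂ) ^ 2) * (P₀ * R).trace := by
      rw [hRR, ← Matrix.mul_assoc, Matrix.trace_mul_comm, ← Matrix.mul_assoc, hAP,
        Matrix.smul_mul, Matrix.trace_smul, smul_eq_mul, Matrix.trace_mul_comm]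
    have e5 : (P₀ * (R * (H₀ ^ 2 * R))).trace = (P₀ * (R * H₀ ^ 2 * R)).trace := by
      rw [Matrix.mul_assoc]
    have eB : P₀ * (R * B * R) = P₀ * (R * H₀ ^ 2 * R) - ((E₀:ℂ)^2) • (P₀ * (R * R)) := by
      rw [hB]
      simp only [Matrix.mul_sub, Matrix.sub_mul, Matrix.smul_mul, Matrix.mul_smul,
        Matrix.mul_one]
    have expand : P₀ * v =
        (-Complex.I) • (P₀ * (H₀ * R) - P₀ * (R * H₀))
        - (γ : ℂ) • (P₀ * (H₀ ^ 2 * R * R) - P₀ * (R * (H₀ ^ 2 * R))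
            - (P₀ * (R * (H₀ ^ 2 * R)) - P₀ * (R * R * H₀ ^ 2))) := by
      rw [hv]
      simp only [Ring.lie_def, Matrix.mul_sub, Matrix.sub_mul, Matrix.mul_smul,
        Matrix.mul_assoc]
    rw [expand, eB]
    simp only [Matrix.trace_sub, Matrix.trace_smul]
    rw [e1, e2, e3, e4, e5, hRR]
    simp only [smul_eq_mul]
    ring
  -- positivity
  have hQ : (Rᴴ * B * R).PosSemidef := hLoewner.conjTranspose_mul_mul_same R
  have hQ' : (R * B * R).PosSemidef := by rwa [hRH] at hQ
  have htr : 0 ≤ (P₀ * (R * B * R)).trace := by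
    have heq : (P₀ * (R * B * R)).trace = (P₀ᴴ * (R * B * R) * P₀).trace := by
      conv_rhs => rw [Matrix.trace_mul_comm, ← Matrix.mul_assoc, hPherm, hP2]
    rw [heq]
    exact trace_nonneg_of_posSemidef (hQ'.conjTranspose_mul_mul_same P₀)
  rw [hde, key]
  have h2γ : (0 : ℂ) ≤ 2 * (γ : ℂ) := by
    have : ((2 * γ : ℝ) : ℂ) = 2 * (γ : ℂ) := by push_cast; ring
    rw [← this]
    exact_mod_cast (by linarith : (0:ℝ) ≤ 2 * γ)
  exact mul_nonneg h2γ htr
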